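/- For any two ordered rooted binary trees S and T with n internal nodes each (and the same leaf set), the rotation distance d_R(S,T) is at most 2n - 2. -/
import Mathlib


inductive BT : Type
  | leaf : BT
  | node : BT → BT → BT
deriving DecidableEq

namespace BT

/-- number of internal nodes -/
def size : BT → ℕ
  | leaf => 0
  | node l r => size l + size r + 1

/-- number of leaves -/
def nl (t : BT) : ℕ := size t + 1

/-- one (right) rotation somewhere in the tree -/
inductive Rot : BT → BT → Prop
  | root (a b c : BT) : Rot (node (node a b) c) (node a (node b c))
  | congrL {l l' : BT} (r : BT) : Rot l l' → Rot (node l r) (node l' r)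
  | congrR (l : BT) {r r' : BT} : Rot r r' → Rot (node l r) (node l r')

/-- a rotation move: a right rotation or its inverse (a left rotation) -/
def Move (s t : BT) : Prop := Rot s t ∨ Rot t s

/-- `Chain n s t`: `s` is transformed into `t` by `n` rotation moves -/
inductive Chain : ℕ → BT → BT → Prop
  | refl (t : BT) : Chain 0 t t
  | step {n : ℕ} {s u t : BT} : Move s u → Chain n u t → Chain (n + 1) s t

/-- rotation distance -/
noncomputable def dR (s t : BT) : ℕ := sInf {n | Chain n s t}

def isNode : BT → Bool
  | leaf => false
  | node _ _ => true

/-- the multiset of leaf partitions induced by internal edges, where the leaves of the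
tree are numbered from `k` on, left to right; each internal edge is recorded by the
set of leaf numbers below it. -/
def iparts : BT → ℕ → Multiset (Finset ℕ)
  | leaf, _ => 0
  | node l r, k =>
      ((if isNode l then {Finset.Ico k (k + nl l)} else 0) + iparts l k)
        + ((if isNode r then {Finset.Ico (k + nl l) (k + nl l + nl r)} else 0)
            + iparts r (k + nl l))

/-- number of common edge pairs -/
def commonEdges (s t : BT) : ℕ := ((iparts s 0) ∩ (iparts t 0)).card

/-- right comb with n internal nodes -/
def comb : ℕ → BT
  | 0 => leaf
  | n + 1 => node leaf (comb n)

/-- left spine length -/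
def g : BT → ℕ
  | leaf => 0
  | node a _ => g a + 1

/-- right spine length -/
def rs : BT → ℕ
  | leaf => 0
  | node _ r => rs r + 1

lemma chain_trans {a b : ℕ} {s u t : BT} (h1 : Chain a s u) (h2 : Chain b u t) :
    Chain (a + b) s t := by
  induction h1 with
  | refl => simpa using h2
  | step m _ ih =>
    have := Chain.step m (ih h2)
    simpa [Nat.add_right_comm] using this

lemma move_symm {s t : BT} (h : Move s t) : Move t s := h.symm

lemma chain_snoc {n : ℕ} {s u t : BT} (h : Chain n s u) (m : Move u t) :
    Chain (n + 1) s t := by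
  induction h with
  | refl => exact Chain.step m (Chain.refl _)
  | step m' _ ih => exact Chain.step m' (ih m)

lemma chain_symm {n : ℕ} {s t : BT} (h : Chain n s t) : Chain n t s := by
  induction h with
  | refl => exact Chain.refl _
  | step m _ ih => exact chain_snoc ih (move_symm m)

lemma chain_congrR {n : ℕ} (l : BT) {r r' : BT} (h : Chain n r r') :
    Chain n (node l r) (node l r') := by
  induction h with
  | refl => exact Chain.refl _
  | step m _ ih =>
    refine Chain.step ?_ ih
    rcases m with m | m
    · exact Or.inl (Rot.congrR l m)
    · exact Or.inr (Rot.congrR l m)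

/-- pouring the left spine of `l` into the right via root rotations -/
lemma pour : ∀ l r : BT, ∃ u, Chain (g l) (node l r) (node leaf u) ∧
    size u = size l + size r ∧ rs u = g l + rs r := by
  intro l
  induction l with
  | leaf => intro r; exact ⟨r, Chain.refl _, by simp [size], by simp [g]⟩
  | node a b iha _ =>
    intro r
    obtain ⟨u, hc, hs, hr⟩ := iha (node b r)
    refine ⟨u, ?_, ?_, ?_⟩
    · have : Chain (g a + 1) (node (node a b) r) (node leaf u) :=
        Chain.step (Or.inl (Rot.root a b r)) hc
      simpa [g] using this
    · simp [size] at hs ⊢; omega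
    · simp [g, rs] at hr ⊢; omega

lemma toComb : ∀ (N : ℕ) (t : BT), t.size ≤ N →
    ∃ k, Chain k t (comb t.size) ∧ k + rs t ≤ t.size := by
  intro N
  induction N with
  | zero =>
    intro t ht
    cases t with
    | leaf => exact ⟨0, Chain.refl _, by simp [rs, size]⟩
    | node l r => simp [size] at ht
  | succ N ih =>
    intro t ht
    cases t with
    | leaf => exact ⟨0, Chain.refl _, by simp [rs, size]⟩
    | node l r =>
      obtain ⟨u, hc, hs, hr⟩ := pour l r
      have hsz : size (node l r) = size u + 1 := by simp [size]; omega
      have hult : size u ≤ N := by simp [size] at ht; omega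
      obtain ⟨k', hc', hb'⟩ := ih u hult
      have hcc : Chain k' (node leaf u) (node leaf (comb (size u))) :=
        chain_congrR leaf hc'
      have hcomb : node leaf (comb (size u)) = comb (size (node l r)) := by
        rw [hsz]; rfl
      refine ⟨g l + k', ?_, ?_⟩
      · rw [← hcomb]; exact chain_trans hc hcc
      · simp [rs] at hb' ⊢; omega

lemma rs_pos {t : BT} (h : 1 ≤ t.size) : 1 ≤ rs t := by
  cases t with
  | leaf => simp [size] at h
  | node l r => simp [rs]

theorem culik_wood_bound (n : ℕ) (S T : BT) (hS : S.size = n) (hT : T.size = n) :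
    ∃ k, Chain k S T ∧ k ≤ 2 * n - 2 := by
  obtain ⟨k1, hc1, hb1⟩ := toComb S.size S le_rfl
  obtain ⟨k2, hc2, hb2⟩ := toComb T.size T le_rfl
  rw [hS] at hc1 hb1
  rw [hT] at hc2 hb2
  refine ⟨k1 + k2, chain_trans hc1 (chain_symm hc2), ?_⟩
  rcases Nat.eq_zero_or_pos n with h0 | h1
  · omega
  · have h1S : 1 ≤ rs S := rs_pos (by omega)
    have h1T : 1 ≤ rs T := rs_pos (by omega)
    omega

end BT
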